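/- Let f : ℝ → ℝ be continuous with f(x) > 0 for all x, let x₀ ∈ ℝ and t∞ ∈ (0,∞], and let x : [0, t∞) → ℝ be differentiable with x(0) = x₀, x′(t) = f(x(t)) for all t ∈ [0, t∞), and x(t) → +∞ as t → t∞. Then t∞ = ∫_{x₀}^∞ du/f(u) (as an equality in (0,∞]); in particular t∞ < ∞ if and only if ∫_{x₀}^∞ du/f(u) < ∞. -/

import Mathlib

open MeasureTheory Set Filter
open scoped ENNReal

/-- If `x` solves `x' = f(x)`, `x(0) = x₀`, on `[0, t∞)` with
`f` continuous positive, and `x(t) → +∞` as `t → t∞` (`t∞ ∈ (0,∞]`), then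
`t∞ = ∫_{x₀}^∞ du/f(u)` in `(0,∞]`; in particular `t∞ < ∞ ↔ ∫_{x₀}^∞ du/f(u) < ∞`. -/
theorem stmt17 (f : ℝ → ℝ) (hf : Continuous f) (hfpos : ∀ u : ℝ, 0 < f u)
    (x₀ : ℝ) (tinf : ℝ≥0∞) (htinf : 0 < tinf)
    (x : ℝ → ℝ) (hx0 : x 0 = x₀)
    (hode : ∀ t : ℝ, t ∈ {s : ℝ | 0 ≤ s ∧ ENNReal.ofReal s < tinf} →
      HasDerivWithinAt x (f (x t)) {s : ℝ | 0 ≤ s ∧ ENNReal.ofReal s < tinf} t)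
    (hblow : Tendsto x
      (Filter.comap (fun t : ℝ => ENNReal.ofReal t) (nhdsWithin tinf (Iio tinf)) ⊓
        Filter.principal {s : ℝ | 0 ≤ s}) atTop) :
    tinf = (∫⁻ u in Ici x₀, ENNReal.ofReal (1 / f u)) ∧
      (tinf < ⊤ ↔ (∫⁻ u in Ici x₀, ENNReal.ofReal (1 / f u)) < ⊤) := by
  set S : Set ℝ := {s : ℝ | 0 ≤ s ∧ ENNReal.ofReal s < tinf} with hSdef
  set g : ℝ → ℝ≥0∞ := fun u => ENNReal.ofReal (1 / f u) with hgdef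
  set L : Filter ℝ :=
    Filter.comap (fun t : ℝ => ENNReal.ofReal t) (nhdsWithin tinf (Iio tinf)) ⊓
      Filter.principal {s : ℝ | 0 ≤ s} with hLdef
  have hf0 : ∀ u : ℝ, f u ≠ 0 := fun u => (hfpos u).ne'
  have hcont : Continuous (fun u => 1 / f u) := by
    simpa only [one_div] using (show Continuous fun u => (f u)⁻¹ from hf.inv₀ hf0)
  have h0S : (0 : ℝ) ∈ S := ⟨le_refl 0, by simpa using htinf⟩
  have hconv : Convex ℝ S := by
    apply Set.OrdConnected.convex
    constructor
    rintro a ⟨ha0, _⟩ b ⟨_, hb⟩ c ⟨hac, hcb⟩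
    exact ⟨ha0.trans hac, lt_of_le_of_lt (ENNReal.ofReal_le_ofReal hcb) hb⟩
  -- separation of variables: `∫_{x₀}^{x t} du / f u = t` on `S`
  have key1 : ∀ t ∈ S, (∫ u in x₀..x t, 1 / f u) = t := by
    intro t ht
    have hcomp : ∀ s ∈ S,
        HasDerivWithinAt (fun r => (∫ u in x₀..x r, 1 / f u) - r) ((fun _ : ℝ => (0:ℝ)) s) S s := by
      intro s hs
      have hF : HasDerivAt (fun y => ∫ u in x₀..y, 1 / f u) (1 / f (x s)) (x s) :=
        (hcont.integral_hasStrictDerivAt x₀ (x s)).hasDerivAt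
      have h1 : (1 / f (x s)) * f (x s) = 1 := by
        rw [one_div, inv_mul_cancel₀ (hf0 _)]
      have h2 := hF.comp_hasDerivWithinAt s (hode s hs)
      rw [h1] at h2
      have h3 := h2.sub (hasDerivWithinAt_id s S)
      rw [sub_self] at h3
      exact h3
    have hb := hconv.norm_image_sub_le_of_norm_hasDerivWithin_le (C := 0) hcomp
      (fun s _ => by simp) h0S ht
    simp [hx0, sub_eq_zero] at hb
    simpa [one_div] using hb
  -- the solution stays above `x₀`
  have key2 : ∀ t ∈ S, x₀ ≤ x t := by
    intro t ht
    by_contra h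
    push_neg at h
    have hpos : 0 < ∫ u in x t..x₀, 1 / f u :=
      intervalIntegral.intervalIntegral_pos_of_pos (hcont.intervalIntegrable _ _)
        (fun u => one_div_pos.mpr (hfpos u)) h
    rw [intervalIntegral.integral_symm] at hpos
    have h1 := key1 t ht
    have h2 := ht.1
    rw [h1] at hpos
    linarith
  -- comparison of the interval integral and the lintegral
  have key3 : ∀ y : ℝ, x₀ ≤ y →
      (∫⁻ u in Icc x₀ y, g u) = ENNReal.ofReal (∫ u in x₀..y, 1 / f u) := by
    intro y hy
    rw [intervalIntegral.integral_of_le hy, ← MeasureTheory.restrict_Ioc_eq_restrict_Icc,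
      ofReal_integral_eq_lintegral_ofReal (hcont.integrableOn_Ioc)
        (ae_of_all _ fun u => (one_div_pos.mpr (hfpos u)).le)]
  have key4 : ∀ t ∈ S, (∫⁻ u in Icc x₀ (x t), g u) = ENNReal.ofReal t := by
    intro t ht
    rw [key3 (x t) (key2 t ht), key1 t ht]
  -- first inequality : `tinf ≤ ∫⁻`
  have le1 : tinf ≤ ∫⁻ u in Ici x₀, g u := by
    by_contra h
    push_neg at h
    obtain ⟨c, hc1, hc2⟩ := exists_between h
    have hct : c ≠ ⊤ := (hc2.trans_le le_top).ne
    have htS : c.toReal ∈ S := ⟨ENNReal.toReal_nonneg, by rwa [ENNReal.ofReal_toReal hct]⟩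
    have hcle : c ≤ ∫⁻ u in Ici x₀, g u := by
      calc c = ENNReal.ofReal c.toReal := (ENNReal.ofReal_toReal hct).symm
        _ = ∫⁻ u in Icc x₀ (x c.toReal), g u := (key4 _ htS).symm
        _ ≤ ∫⁻ u in Ici x₀, g u := lintegral_mono_set (fun u hu => hu.1)
    exact absurd hcle (not_le.mpr hc1)
  -- the blow-up filter is nontrivial
  have hne : L.NeBot := by
    rw [← Filter.forall_mem_nonempty_iff_neBot]
    intro s hs
    rw [hLdef, Filter.mem_inf_principal, Filter.mem_comap] at hs
    obtain ⟨U, hU, hUs⟩ := hs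
    have : NeBot (nhdsWithin tinf (Iio tinf)) := nhdsWithin_Iio_self_neBot' ⟨0, htinf⟩
    obtain ⟨a, haU, ha⟩ := Filter.nonempty_of_mem (Filter.inter_mem hU self_mem_nhdsWithin)
    have hat : a ≠ ⊤ := (lt_of_lt_of_le ha le_top).ne
    refine ⟨a.toReal, ?_⟩
    have h1 : a.toReal ∈ (fun t : ℝ => ENNReal.ofReal t) ⁻¹' U := by
      simpa [ENNReal.ofReal_toReal hat] using haU
    exact hUs h1 ENNReal.toReal_nonneg
  -- the solution reaches arbitrarily large values
  have exists_big : ∀ y : ℝ, ∃ t, t ∈ S ∧ y ≤ x t := by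
    intro y
    have h1 : {t : ℝ | y ≤ x t} ∈ L := hblow.eventually_ge_atTop y
    have hBmem : (fun t : ℝ => ENNReal.ofReal t) ⁻¹' (Iio tinf) ∈ L :=
      Filter.mem_inf_of_left (Filter.preimage_mem_comap self_mem_nhdsWithin)
    have hAmem : {s : ℝ | 0 ≤ s} ∈ L :=
      Filter.mem_inf_of_right (Filter.mem_principal_self _)
    have h2 : S ∈ L := by
      filter_upwards [hAmem, hBmem] with t hA hB
      exact ⟨hA, hB⟩
    obtain ⟨t, hts, hty⟩ := Filter.nonempty_of_mem (Filter.inter_mem h2 h1)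
    exact ⟨t, hts, hty⟩
  -- second inequality : `∫⁻ ≤ tinf`
  have hgm : Measurable g := ENNReal.measurable_ofReal.comp hcont.measurable
  have hIci : Ici x₀ = ⋃ n : ℕ, Icc x₀ (x₀ + n) := by
    ext u
    simp only [mem_Ici, mem_iUnion, mem_Icc]
    constructor
    · intro hu
      obtain ⟨n, hn⟩ := exists_nat_ge (u - x₀)
      exact ⟨n, hu, by linarith⟩
    · rintro ⟨n, h1, _⟩
      exact h1
  have le2 : (∫⁻ u in Ici x₀, g u) ≤ tinf := by
    have hwd : ∀ s : Set ℝ, MeasurableSet s →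
        (volume.withDensity g) s = ∫⁻ u in s, g u :=
      fun s hs => withDensity_apply g hs
    have hdir : Directed (· ⊆ ·) (fun n : ℕ => Icc x₀ (x₀ + (n : ℝ))) := by
      apply Monotone.directed_le
      intro m n hmn
      exact Icc_subset_Icc_right (by have := (Nat.cast_le (α := ℝ)).mpr hmn; linarith)
    rw [← hwd _ measurableSet_Ici, hIci, hdir.measure_iUnion]
    apply iSup_le
    intro n
    obtain ⟨t, htS, hty⟩ := exists_big (x₀ + n)
    rw [hwd _ measurableSet_Icc]
    calc (∫⁻ u in Icc x₀ (x₀ + n), g u) ≤ ∫⁻ u in Icc x₀ (x t), g u :=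
          lintegral_mono_set (Icc_subset_Icc_right hty)
      _ = ENNReal.ofReal t := key4 t htS
      _ ≤ tinf := (htS.2).le
  have heq : tinf = ∫⁻ u in Ici x₀, g u := le_antisymm le1 le2
  exact ⟨heq, by rw [heq]⟩
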